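/- arXiv:2508.05401 — 5 statements merged into one kernel-verified Lean document; each statement's English description precedes it below -/
import Mathlib

section
/- Let n ∈ {2,3}, ω > 0, μ > 0, λ ∈ ℝ, and set κ_s = ω/√μ. Let d, d⊥ ∈ ℝⁿ be unit vectors with d·d⊥ = 0, and let τ > κ_s. Define ξ = τ d + i √(κ_s² + τ²) d⊥ ∈ ℂⁿ and η = −i √(1 + κ_s²/τ²) d + d⊥ ∈ ℂⁿ, and let u₀ : ℝⁿ → ℂⁿ be the complex geometric optics solution u₀(x) = η e^{ξ·x}. Then ℒu₀ + ω² u₀ = 0 at every point of ℝⁿ. -/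
open scoped BigOperators NNReal ENNReal
open MeasureTheory Metric Set

noncomputable section

abbrev Euc (n : ℕ) := EuclideanSpace ℝ (Fin n)
abbrev EucC (n : ℕ) := EuclideanSpace ℂ (Fin n)

/-- Bundle a plain function into `EuclideanSpace`. -/
def toEuc {n : ℕ} (f : Fin n → ℝ) : Euc n := (WithLp.equiv 2 (Fin n → ℝ)).symm f

/-- Partial derivative `∂ⱼ f` of a scalar-valued function. -/
def pd {n : ℕ} (j : Fin n) (f : Euc n → ℂ) (x : Euc n) : ℂ :=
  fderiv ℝ f x (EuclideanSpace.single j 1)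

/-- The Lamé operator `(ℒu)ᵢ = μ Σⱼ ∂ⱼ∂ⱼuᵢ + (λ+μ) ∂ᵢ(Σⱼ ∂ⱼuⱼ)`. -/
def lame {n : ℕ} (lam mu : ℝ) (u : Euc n → EucC n) (x : Euc n) (i : Fin n) : ℂ :=
  (mu : ℂ) * ∑ j, pd j (fun y => pd j (fun z => u z i) y) x
    + ((lam : ℂ) + (mu : ℂ)) * pd i (fun y => ∑ j, pd j (fun z => u z j) y) x

/-- The set of Hölder quotients (componentwise) of a vector-valued function. -/
def holderSet {n m : ℕ} (δ : ℝ) (S : Set (Euc n)) (φ : Euc n → EucC m) : Set ℝ :=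
  {r | ∃ i : Fin m, ∃ x ∈ S, ∃ y ∈ S, x ≠ y ∧ r = ‖φ x i - φ y i‖ / ‖x - y‖ ^ δ}

/-- Hölder seminorm `[φ]_{δ,S} = maxᵢ sup_{x≠y∈S} |φᵢ(x)−φᵢ(y)|/|x−y|^δ`. -/
def holderSemi {n m : ℕ} (δ : ℝ) (S : Set (Euc n)) (φ : Euc n → EucC m) : ℝ :=
  sSup (insert 0 (holderSet δ S φ))

/-- Sup norm `‖φ‖_{L^∞(S)} = sup_S |φ|`. -/
def supNorm {n m : ℕ} (S : Set (Euc n)) (φ : Euc n → EucC m) : ℝ :=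
  sSup (insert 0 ((fun x => ‖φ x‖) '' S))

/-- L² norm on a set. -/
def l2norm {n m : ℕ} (S : Set (Euc n)) (f : Euc n → EucC m) : ℝ :=
  Real.sqrt (∫ x in S, ‖f x‖ ^ 2)

/-- H¹ norm on a set. -/
def h1norm {n m : ℕ} (S : Set (Euc n)) (f : Euc n → EucC m) : ℝ :=
  Real.sqrt (∫ x in S, (‖f x‖ ^ 2 + ‖fderiv ℝ f x‖ ^ 2))

/-- Hölder norm `‖φ‖_{C^α(S)}`. -/
def cNorm {n m : ℕ} (α : ℝ) (S : Set (Euc n)) (φ : Euc n → EucC m) : ℝ :=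
  supNorm S φ + holderSemi α S φ

/-- Frequency-scaled Hölder norm `‖φ‖_{C̃^δ(S)} = ‖φ‖_∞ + ω^{−δ}[φ]_{δ,S}`. -/
def ctNorm {n m : ℕ} (ω δ : ℝ) (S : Set (Euc n)) (φ : Euc n → EucC m) : ℝ :=
  supNorm S φ + ω ^ (-δ) * holderSemi δ S φ

/-- scalar versions -/
def holderSetS {n : ℕ} (δ : ℝ) (S : Set (Euc n)) (φ : Euc n → ℂ) : Set ℝ :=
  {r | ∃ x ∈ S, ∃ y ∈ S, x ≠ y ∧ r = ‖φ x - φ y‖ / ‖x - y‖ ^ δ}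

def holderSemiS {n : ℕ} (δ : ℝ) (S : Set (Euc n)) (φ : Euc n → ℂ) : ℝ :=
  sSup (insert 0 (holderSetS δ S φ))

def supNormS {n : ℕ} (S : Set (Euc n)) (φ : Euc n → ℂ) : ℝ :=
  sSup (insert 0 ((fun x => ‖φ x‖) '' S))

def cNormS {n : ℕ} (α : ℝ) (S : Set (Euc n)) (φ : Euc n → ℂ) : ℝ :=
  supNormS S φ + holderSemiS α S φ

def ctNormS {n : ℕ} (ω δ : ℝ) (S : Set (Euc n)) (φ : Euc n → ℂ) : ℝ :=
  supNormS S φ + ω ^ (-δ) * holderSemiS δ S φ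

def h1normS {n : ℕ} (S : Set (Euc n)) (f : Euc n → ℂ) : ℝ :=
  Real.sqrt (∫ x in S, (‖f x‖ ^ 2 + ‖fderiv ℝ f x‖ ^ 2))

/-- A bounded Lipschitz domain: open, bounded, nonempty, and near every boundary
point the set is the supergraph of a Lipschitz function in a suitable direction. -/
def IsLipschitzDomain {E : Type*} [NormedAddCommGroup E] [InnerProductSpace ℝ E]
    (Ω : Set E) : Prop :=
  IsOpen Ω ∧ Bornology.IsBounded Ω ∧ Ω.Nonempty ∧
  ∀ x ∈ frontier Ω, ∃ (v : E) (r : ℝ) (L : ℝ≥0) (f : E → ℝ),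
    ‖v‖ = 1 ∧ 0 < r ∧ LipschitzWith L f ∧
    ∀ y ∈ Metric.ball x r,
      (y ∈ Ω ↔ f (y - (inner ℝ y v : ℝ) • v) < (inner ℝ y v : ℝ))

/-- last coordinate index -/
def lastC (n : ℕ) [NeZero n] : Fin n :=
  ⟨n - 1, Nat.sub_lt (Nat.pos_of_ne_zero (NeZero.ne n)) one_pos⟩

/-- squared Euclidean norm of the tangential part `x′` -/
def sqnorm' {n : ℕ} [NeZero n] (x : Euc n) : ℝ :=
  ∑ j ∈ Finset.univ.erase (lastC n), x j ^ 2

/-- drop the last coordinate -/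
def projLast {n : ℕ} (x : Euc n) : Euc (n - 1) :=
  toEuc fun j : Fin (n - 1) => x ⟨j.1, lt_of_lt_of_le j.2 (Nat.sub_le n 1)⟩

/-- put back a last coordinate -/
def stack {n : ℕ} (w : Euc (n - 1)) (t : ℝ) : Euc n :=
  toEuc fun i : Fin n => if h : i.1 < n - 1 then w ⟨i.1, h⟩ else t

/-- Admissible `K`-curvature point with parameters `K, L, M, ς`. -/
def AdmissibleKPoint {n : ℕ} [NeZero n] (Ω : Set (Euc n)) (q : Euc n)
    (K L M ς : ℝ) : Prop :=
  1 ≤ M ∧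
  ∃ T : Euc n ≃ᵃⁱ[ℝ] Euc n, T q = 0 ∧
  ∃ γ : Euc (n - 1) → ℝ, ContDiff ℝ 3 γ ∧
    (∀ w : Euc (n - 1), ‖w‖ < Real.sqrt M / K → 0 ≤ γ w) ∧
    (∀ x : Euc n, ‖projLast x‖ < Real.sqrt M / K → -(1 / K) < x (lastC n) →
        x (lastC n) < 1 / K → (x ∈ T '' Ω ↔ γ (projLast x) < x (lastC n))) ∧
    (∃ c : ℝ, ∀ w : Euc (n - 1), ‖w‖ < Real.sqrt M / K →
        |γ w - K * ‖w‖ ^ 2| ≤ c * ‖w‖ ^ 3) ∧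
    (∃ Km Kp : ℝ, 0 < Km ∧ Km ≤ K ∧ K ≤ Kp ∧
        (∀ w : Euc (n - 1), ‖w‖ < Real.sqrt M / K →
          Km * ‖w‖ ^ 2 ≤ γ w ∧ γ w ≤ Kp * ‖w‖ ^ 2) ∧
        M⁻¹ ≤ Km / K ∧ Km / K ≤ M ∧ M⁻¹ ≤ Kp / K ∧ Kp / K ≤ M ∧
        Kp - Km ≤ L * K ^ (1 - ς)) ∧
    IsLipschitzDomain {w : Euc (n - 1) | stack w (1 / K) ∈
      closure {x : Euc n | ‖projLast x‖ < Real.sqrt M / K ∧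
        -(1 / K) < x (lastC n) ∧ x (lastC n) < 1 / K ∧ x ∈ T '' Ω}}

lemma pd_exp {n : ℕ} (ξ : Fin n → ℂ) (c : ℂ) (j : Fin n) (x : Euc n) :
    pd j (fun z => c * Complex.exp (∑ k, ξ k * (z k : ℂ))) x
      = c * ξ j * Complex.exp (∑ k, ξ k * (x k : ℂ)) := by
  set L : Euc n →L[ℝ] ℂ :=
    ∑ k, ξ k • ((Complex.ofRealCLM : ℝ →L[ℝ] ℂ).comp (EuclideanSpace.proj k)) with hLdef
  have hL : ∀ z : Euc n, L z = ∑ k, ξ k * (z k : ℂ) := by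
    intro z
    simp [hLdef, ContinuousLinearMap.sum_apply]
  have hLs : L (EuclideanSpace.single j 1) = ξ j := by
    rw [hL]
    have : ∀ k : Fin n, ((EuclideanSpace.single j (1:ℝ)) k : ℂ) = if k = j then 1 else 0 := by
      intro k; rw [EuclideanSpace.single_apply]; split <;> simp
    simp only [this, mul_ite, mul_one, mul_zero, Finset.sum_ite_eq', Finset.mem_univ, if_true]
  have h1 : HasFDerivAt (fun z : Euc n => Complex.exp (L z))
      (Complex.exp (L x) • (L : Euc n →L[ℝ] ℂ)) x := by
    have h2 : HasFDerivAt Complex.exp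
        (((1 : ℂ →L[ℂ] ℂ).smulRight (Complex.exp (L x))).restrictScalars ℝ) (L x) :=
      (Complex.hasDerivAt_exp (L x)).hasFDerivAt.restrictScalars ℝ
    have := h2.comp x (L.hasFDerivAt)
    refine this.congr_fderiv ?_
    ext v
    simp [mul_comm]
  have h3 : HasFDerivAt (fun z : Euc n => c * Complex.exp (L z))
      (c • (Complex.exp (L x) • (L : Euc n →L[ℝ] ℂ))) x := h1.const_mul c
  have h4 : pd j (fun z => c * Complex.exp (L z)) x = c * ξ j * Complex.exp (L x) := by
    rw [pd, h3.fderiv]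
    simp [hLs]; ring
  simp only [hL] at h4
  exact h4


/-- Lemma `lem:cgo`: the complex geometric optics function
`u₀(x) = η e^{ξ·x}`, with `ξ = τd + i√(κ_s²+τ²) d⊥` and `η = −i√(1+κ_s²/τ²) d + d⊥`,
satisfies `ℒu₀ + ω²u₀ = 0` everywhere. -/
theorem cgo_solution_lame
    (n : ℕ) (hn : n = 2 ∨ n = 3) (ω lam mu τ : ℝ)
    (hω : 0 < ω) (hmu : 0 < mu)
    (d dp : Euc n) (hd : ‖d‖ = 1) (hdp : ‖dp‖ = 1)
    (horth : (inner ℝ d dp : ℝ) = 0)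
    (hτ : ω / Real.sqrt mu < τ)
    (ξ η : Fin n → ℂ)
    (hξ : ∀ j, ξ j = (τ : ℂ) * (d j : ℂ) +
        Complex.I * (Real.sqrt ((ω / Real.sqrt mu) ^ 2 + τ ^ 2) : ℂ) * (dp j : ℂ))
    (hη : ∀ j, η j = -Complex.I * (Real.sqrt (1 + (ω / Real.sqrt mu) ^ 2 / τ ^ 2) : ℂ) *
        (d j : ℂ) + (dp j : ℂ))
    (u₀ : Euc n → EucC n)
    (hu₀ : ∀ x i, u₀ x i = η i * Complex.exp (∑ j, ξ j * (x j : ℂ))) :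
    ∀ x i, lame lam mu u₀ x i + (ω : ℂ) ^ 2 * u₀ x i = 0 := by
  -- abbreviations
  set κ : ℝ := ω / Real.sqrt mu with hκ
  have hκpos : 0 < κ := div_pos hω (Real.sqrt_pos.mpr hmu)
  have hτpos : 0 < τ := lt_trans hκpos hτ
  set s : ℝ := Real.sqrt (κ ^ 2 + τ ^ 2) with hs
  set r : ℝ := Real.sqrt (1 + κ ^ 2 / τ ^ 2) with hr
  have hs2 : s ^ 2 = κ ^ 2 + τ ^ 2 := Real.sq_sqrt (by positivity)
  have hsr : τ * r = s := by
    rw [hr, hs, ← Real.sqrt_sq hτpos.le, ← Real.sqrt_mul (by positivity)]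
    congr 1
    field_simp
    rw [Real.sqrt_sq hτpos.le]; ring
  -- real sums
  have hdd : ∑ j, d j * d j = 1 := by
    have h1 : (inner ℝ d d : ℝ) = ∑ j, d j * d j := by
      rw [PiLp.inner_apply]; simp [RCLike.inner_apply, mul_comm, pow_two]
    have h2 : (inner ℝ d d : ℝ) = 1 := by
      rw [real_inner_self_eq_norm_sq, hd]; norm_num
    linarith [h1 ▸ h2]
  have hpp : ∑ j, dp j * dp j = 1 := by
    have h1 : (inner ℝ dp dp : ℝ) = ∑ j, dp j * dp j := by
      rw [PiLp.inner_apply]; simp [RCLike.inner_apply, mul_comm, pow_two]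
    have h2 : (inner ℝ dp dp : ℝ) = 1 := by
      rw [real_inner_self_eq_norm_sq, hdp]; norm_num
    linarith [h1 ▸ h2]
  have hdp0 : ∑ j, d j * dp j = 0 := by
    have h1 : (inner ℝ d dp : ℝ) = ∑ j, d j * dp j := by
      rw [PiLp.inner_apply]; simp [RCLike.inner_apply, mul_comm, pow_two]
    linarith [h1 ▸ horth]
  -- complex sums
  have hddC : ∑ j, (d j : ℂ) * (d j : ℂ) = 1 := by
    rw [show (1:ℂ) = ((1:ℝ):ℂ) by norm_num, ← hdd]; push_cast; rfl
  have hppC : ∑ j, (dp j : ℂ) * (dp j : ℂ) = 1 := by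
    rw [show (1:ℂ) = ((1:ℝ):ℂ) by norm_num, ← hpp]; push_cast; rfl
  have hdp0C : ∑ j, (d j : ℂ) * (dp j : ℂ) = 0 := by
    rw [show (0:ℂ) = ((0:ℝ):ℂ) by norm_num, ← hdp0]; push_cast; rfl
  -- ∑ ξ² = -κ²
  have sum_sq : ∑ j, ξ j ^ 2 = -(κ : ℂ) ^ 2 := by
    have expand : ∀ j, ξ j ^ 2 = (τ:ℂ)^2 * ((d j :ℂ) * (d j :ℂ))
        + (2 * τ * Complex.I * (s:ℂ)) * ((d j :ℂ) * (dp j :ℂ))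
        + (Complex.I * (s:ℂ))^2 * ((dp j :ℂ) * (dp j :ℂ)) := by
      intro j; rw [hξ j]; ring
    rw [Finset.sum_congr rfl fun j _ => expand j]
    rw [Finset.sum_add_distrib, Finset.sum_add_distrib, ← Finset.mul_sum, ← Finset.mul_sum,
      ← Finset.mul_sum, hddC, hppC, hdp0C]
    have hs2C : ((s:ℂ))^2 = (κ:ℂ)^2 + (τ:ℂ)^2 := by
      exact_mod_cast hs2
    rw [mul_pow, Complex.I_sq]
    rw [hs2C]; ring
  -- ∑ ξ η = 0
  have sum_xe : ∑ j, ξ j * η j = 0 := by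
    have expand : ∀ j, ξ j * η j = (-Complex.I * (τ:ℂ) * (r:ℂ)) * ((d j :ℂ) * (d j :ℂ))
        + ((τ:ℂ) - Complex.I ^ 2 * (s:ℂ) * (r:ℂ)) * ((d j :ℂ) * (dp j :ℂ))
        + (Complex.I * (s:ℂ)) * ((dp j :ℂ) * (dp j :ℂ)) := by
      intro j; rw [hξ j, hη j]; ring
    rw [Finset.sum_congr rfl fun j _ => expand j]
    rw [Finset.sum_add_distrib, Finset.sum_add_distrib, ← Finset.mul_sum, ← Finset.mul_sum,
      ← Finset.mul_sum, hddC, hppC, hdp0C]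
    have hsrC : (τ:ℂ) * (r:ℂ) = (s:ℂ) := by exact_mod_cast hsr
    rw [mul_one, mul_zero, mul_one]
    rw [show -Complex.I * (τ:ℂ) * (r:ℂ) = -Complex.I * ((τ:ℂ)*(r:ℂ)) by ring, hsrC]; ring
  -- μ κ² = ω²
  have hmuκ : (mu : ℂ) * (κ:ℂ)^2 = (ω:ℂ)^2 := by
    have : mu * κ ^ 2 = ω ^ 2 := by
      rw [hκ, div_pow, Real.sq_sqrt hmu.le]
      field_simp
    exact_mod_cast this
  intro x i
  set E : Euc n → ℂ := fun z => Complex.exp (∑ k, ξ k * (z k : ℂ)) with hE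
  have hu : ∀ j : Fin n, (fun z : Euc n => u₀ z j) = fun z => η j * E z := by
    intro j; funext z; rw [hu₀]
  have hpd : ∀ (c : ℂ) (j : Fin n), (fun y : Euc n => pd j (fun z => c * E z) y)
      = fun y => (c * ξ j) * E y := by
    intro c j; funext y; exact pd_exp ξ c j y
  -- second derivatives
  have hterm1 : ∀ j : Fin n, pd j (fun y => pd j (fun z => u₀ z i) y) x
      = η i * ξ j ^ 2 * E x := by
    intro j
    rw [hu i, hpd (η i) j]
    rw [pd_exp ξ (η i * ξ j) j x]
    ring
  -- divergence
  have hdiv : (fun y : Euc n => ∑ j, pd j (fun z => u₀ z j) y)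
      = fun y => (∑ j, η j * ξ j) * E y := by
    funext y
    rw [Finset.sum_mul]
    apply Finset.sum_congr rfl
    intro j _
    rw [hu j]
    have := congrFun (hpd (η j) j) y
    simpa using this
  have hterm2 : pd i (fun y => ∑ j, pd j (fun z => u₀ z j) y) x
      = (∑ j, η j * ξ j) * ξ i * E x := by
    rw [hdiv, pd_exp ξ _ i x]
  have hdiv0 : (∑ j, η j * ξ j) = 0 := by
    rw [← sum_xe]; apply Finset.sum_congr rfl; intro j _; ring
  rw [lame, hterm2, hdiv0, hu₀]
  rw [Finset.sum_congr rfl fun j _ => hterm1 j]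
  rw [← Finset.sum_mul, ← Finset.mul_sum, sum_sq]
  have : Complex.exp (∑ j, ξ j * (x j : ℂ)) = E x := rfl
  rw [this]
  rw [show (mu:ℂ) * (η i * -(κ:ℂ)^2 * E x) = -((mu:ℂ) * (κ:ℂ)^2) * (η i * E x) by ring, hmuκ]
  ring
end
end

section
/- For each n ∈ {2,3} and each α > 0 there is a constant C_{n,α} > 0 such that for all K > 0, b > 0 and τ > 0, ∫_{{x = (x′,xₙ) ∈ ℝⁿ : K|x′|² < xₙ < b}} e^{−τ xₙ} |x|^α dx ≤ C_{n,α} · (b + K^{−1})^{α/2} · b^{(n+α+1)/2} · K^{−(n−1)/2}. -/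
open scoped BigOperators NNReal ENNReal
open MeasureTheory Metric Set

noncomputable section

lemma calc_aux (n : ℕ) (hn1 : 1 ≤ n) (α b K : ℝ) (hb : 0 < b) (hK : 0 < K) :
    (b * (b + K⁻¹)) ^ (α / 2) * ((2 * Real.sqrt (b / K)) ^ (n - 1) * b) =
      2 ^ (n - 1) * (b + K⁻¹) ^ (α / 2) * b ^ (((n : ℝ) + α + 1) / 2) *
        K ^ (-(((n : ℝ) - 1) / 2)) := by
  have hbK : (0:ℝ) ≤ b + K⁻¹ := by positivity
  have hs : Real.sqrt (b / K) = b ^ ((1:ℝ)/2) * K ^ (-(1:ℝ)/2) := by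
    rw [Real.sqrt_eq_rpow, Real.div_rpow hb.le hK.le, div_eq_mul_inv, ← Real.rpow_neg hK.le]
    norm_num
  have hcast : ((n - 1 : ℕ) : ℝ) = (n : ℝ) - 1 := by
    push_cast [Nat.cast_sub hn1]; ring
  rw [Real.mul_rpow hb.le hbK, hs, mul_pow, mul_pow,
    ← Real.rpow_natCast (b ^ ((1:ℝ)/2)) (n-1), ← Real.rpow_natCast (K ^ (-(1:ℝ)/2)) (n-1),
    ← Real.rpow_mul hb.le, ← Real.rpow_mul hK.le, hcast]
  calc b ^ (α/2) * (b + K⁻¹) ^ (α/2) * (2 ^ (n-1) * (b ^ ((1/2) * ((n:ℝ)-1)) * K ^ ((-1/2) * ((n:ℝ)-1))) * b)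
      = 2 ^ (n-1) * (b + K⁻¹) ^ (α/2) * (b ^ (α/2) * b ^ ((1/2) * ((n:ℝ)-1)) * b ^ (1:ℝ)) * K ^ ((-1/2) * ((n:ℝ)-1)) := by
        rw [Real.rpow_one]; ring
    _ = 2 ^ (n-1) * (b + K⁻¹) ^ (α/2) * b ^ (((n:ℝ) + α + 1)/2) * K ^ (-(((n:ℝ) - 1)/2)) := by
        rw [← Real.rpow_add hb, ← Real.rpow_add hb]
        ring_nf

/-- second estimate of Lemma `lem:estimate`:
`∫_{K|x′|²<xₙ<b} e^{−τxₙ}|x|^α dx ≤ C_{n,α} (b+K⁻¹)^{α/2} b^{(n+α+1)/2} K^{−(n−1)/2}`. -/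
theorem truncated_paraboloid_weighted_integral_bound
    (n : ℕ) [NeZero n] (hn : n = 2 ∨ n = 3) (α : ℝ) (hα : 0 < α) :
    ∃ C : ℝ, 0 < C ∧
      ∀ K b τ : ℝ, 0 < K → 0 < b → 0 < τ →
        (∫ x in {x : Euc n | K * sqnorm' x < x (lastC n) ∧ x (lastC n) < b},
            Real.exp (-τ * x (lastC n)) * ‖x‖ ^ α) ≤
          C * (b + K⁻¹) ^ (α / 2) * b ^ (((n : ℝ) + α + 1) / 2) *
            K ^ (-(((n : ℝ) - 1) / 2)) := by
  have hn1 : 1 ≤ n := by rcases hn with h | h <;> omega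
  refine ⟨2 ^ (n - 1), by positivity, ?_⟩
  intro K b τ hK hb hτ
  set r : ℝ := Real.sqrt (b / K) with hr
  have hr0 : 0 < r := Real.sqrt_pos.mpr (div_pos hb hK)
  set S := {x : Euc n | K * sqnorm' x < x (lastC n) ∧ x (lastC n) < b} with hS
  set Bp : Set (Fin n → ℝ) :=
    Set.univ.pi fun j => if j = lastC n then Set.Ioo 0 b else Set.Ioo (-r) r with hBp
  set φ := (MeasurableEquiv.toLp 2 (Fin n → ℝ)).symm with hφ
  -- facts about points of S
  have hmem : ∀ x ∈ S, (0 < x (lastC n) ∧ x (lastC n) < b) ∧ sqnorm' x < b / K := by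
    intro x hx
    obtain ⟨h1, h2⟩ := hx
    have hsq : 0 ≤ sqnorm' x := Finset.sum_nonneg fun j _ => sq_nonneg _
    have h0 : 0 < x (lastC n) := lt_of_le_of_lt (by positivity) h1
    refine ⟨⟨h0, h2⟩, ?_⟩
    rw [lt_div_iff₀ hK]
    calc sqnorm' x * K = K * sqnorm' x := mul_comm _ _
      _ < x (lastC n) := h1
      _ < b := h2
  have hsub : S ⊆ φ ⁻¹' Bp := by
    intro x hx
    obtain ⟨⟨h0, h2⟩, h3⟩ := hmem x hx
    intro j _
    by_cases hj : j = lastC n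
    · simp only [hj, if_pos rfl]
      exact ⟨h0, h2⟩
    · simp only [if_neg hj]
      have hx2 : x j ^ 2 < b / K := by
        refine lt_of_le_of_lt ?_ h3
        exact Finset.single_le_sum (f := fun i => x i ^ 2)
          (fun i _ => sq_nonneg _) (Finset.mem_erase.2 ⟨hj, Finset.mem_univ j⟩)
      have hrsq : r ^ 2 = b / K := Real.sq_sqrt (div_pos hb hK).le
      have hφx : φ x j = x j := rfl
      rw [Set.mem_Ioo, hφx]
      constructor <;> nlinarith
  have hBpm : MeasurableSet Bp := MeasurableSet.univ_pi fun j => by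
    by_cases hj : j = lastC n <;> simp [hj, measurableSet_Ioo]
  have hvolBp : volume Bp = ENNReal.ofReal ((2 * r) ^ (n - 1) * b) := by
    rw [hBp, volume_pi_pi]
    have h1 : ∀ j ∈ Finset.univ.erase (lastC n),
        volume (if j = lastC n then Ioo (0:ℝ) b else Ioo (-r) r) = ENNReal.ofReal (2*r) := by
      intro j hj
      rw [if_neg (Finset.mem_erase.1 hj).1, Real.volume_Ioo]
      congr 1; ring
    rw [← Finset.mul_prod_erase Finset.univ _ (Finset.mem_univ (lastC n)), if_pos rfl,
      Real.volume_Ioo, Finset.prod_congr rfl h1, Finset.prod_const,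
      Finset.card_erase_of_mem (Finset.mem_univ _), Finset.card_univ, Fintype.card_fin,
      sub_zero, ← ENNReal.ofReal_pow (by positivity), ← ENNReal.ofReal_mul (by positivity),
      mul_comm]
  have hvolpre : volume (φ ⁻¹' Bp) = ENNReal.ofReal ((2 * r) ^ (n - 1) * b) := by
    rw [(EuclideanSpace.volume_preserving_symm_measurableEquiv_toLp (Fin n)).measure_preimage
      hBpm.nullMeasurableSet, hvolBp]
  have hSfin : volume S < ⊤ :=
    lt_of_le_of_lt (measure_mono hsub) (by rw [hvolpre]; exact ENNReal.ofReal_lt_top)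
  set M : ℝ := (b * (b + K⁻¹)) ^ (α / 2) with hM
  have hbound : ∀ x ∈ S, ‖Real.exp (-τ * x (lastC n)) * ‖x‖ ^ α‖ ≤ M := by
    intro x hx
    obtain ⟨⟨h0, h2⟩, h3⟩ := hmem x hx
    have hnx : ‖x‖ ^ α ≤ M := by
      have hnorm : ‖x‖ ^ 2 ≤ b * (b + K⁻¹) := by
        rw [EuclideanSpace.norm_eq]
        rw [Real.sq_sqrt (Finset.sum_nonneg fun i _ => sq_nonneg _)]
        simp only [Real.norm_eq_abs, sq_abs]
        have : ∑ i, x i ^ 2 = sqnorm' x + x (lastC n) ^ 2 := by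
          rw [sqnorm']
          exact (Finset.sum_erase_add _ _ (Finset.mem_univ _)).symm
        rw [this]
        have : b * (b + K⁻¹) = b * b + b / K := by field_simp
        nlinarith [le_of_lt h3, sq_nonneg (x (lastC n))]
      calc ‖x‖ ^ α = (‖x‖ ^ 2) ^ (α / 2) := by
            rw [← Real.rpow_natCast ‖x‖ 2, ← Real.rpow_mul (norm_nonneg x)]
            congr 1; ring
        _ ≤ (b * (b + K⁻¹)) ^ (α / 2) :=
            Real.rpow_le_rpow (by positivity) hnorm (by positivity)
    have hexp : Real.exp (-τ * x (lastC n)) ≤ 1 := by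
      rw [Real.exp_le_one_iff]
      nlinarith
    rw [Real.norm_eq_abs, abs_of_nonneg (by positivity)]
    calc Real.exp (-τ * x (lastC n)) * ‖x‖ ^ α ≤ 1 * ‖x‖ ^ α := by
          apply mul_le_mul_of_nonneg_right hexp (by positivity)
      _ = ‖x‖ ^ α := one_mul _
      _ ≤ M := hnx
  have hfm : AEStronglyMeasurable (fun x : Euc n => Real.exp (-τ * x (lastC n)) * ‖x‖ ^ α)
      (volume.restrict S) := by
    apply Continuous.aestronglyMeasurable
    have hcoord : Continuous fun x : Euc n => x (lastC n) :=
      (EuclideanSpace.proj (lastC n) : Euc n →L[ℝ] ℝ).continuous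
    exact (Real.continuous_exp.comp (continuous_const.mul hcoord)).mul
      ((continuous_norm.rpow_const fun x => Or.inr hα.le))
  have key := norm_setIntegral_le_of_norm_le_const (μ := (volume : Measure (Euc n))) hSfin hbound
  have hM0 : 0 ≤ M := by positivity
  have hvleq : (volume S).toReal ≤ (2 * r) ^ (n - 1) * b := by
    have := measure_mono (μ := (volume : Measure (Euc n))) hsub
    rw [hvolpre] at this
    exact ENNReal.toReal_le_of_le_ofReal (by positivity) this
  calc (∫ x in S, Real.exp (-τ * x (lastC n)) * ‖x‖ ^ α)
      ≤ ‖∫ x in S, Real.exp (-τ * x (lastC n)) * ‖x‖ ^ α‖ := le_abs_self _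
    _ ≤ M * (volume S).toReal := key
    _ ≤ M * ((2 * r) ^ (n - 1) * b) := mul_le_mul_of_nonneg_left hvleq hM0
    _ = 2 ^ (n - 1) * (b + K⁻¹) ^ (α / 2) * b ^ (((n : ℝ) + α + 1) / 2) *
          K ^ (-(((n : ℝ) - 1) / 2)) := calc_aux n hn1 α b K hb hK
end
end

section
/- Let n ∈ {2,3}, K > 0, and ξ = (ξ′, ξₙ) ∈ ℂⁿ with Re(ξₙ) < 0. Then the Lebesgue integral ∫_{{x = (x′,xₙ) ∈ ℝⁿ : xₙ > K|x′|²}} e^{ξ·x} dx converges and equals −(1/ξₙ) · ( π/(−ξₙ K) )^{(n−1)/2} · exp( − (ξ′·ξ′)/(4 ξₙ K) ), where ξ·x = Σⱼ ξⱼ xⱼ, ξ′·ξ′ = Σ_{j<n} ξⱼ², and the complex power is taken with the principal branch (which is well defined since Re(−ξₙ K) > 0). -/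
open scoped BigOperators NNReal ENNReal
open MeasureTheory Metric Set

noncomputable section

section ParaboloidAux
open MeasureTheory Set Filter Topology Complex


lemma myExpReal_tendsto (β : ℝ) (hβ : β < 0) :
    Tendsto (fun t : ℝ => Real.exp (β * t)) atTop (𝓝 0) := by
  have h2 : Tendsto (fun t : ℝ => β * t) atTop atBot :=
    (tendsto_const_mul_atBot_of_neg hβ).2 tendsto_id
  exact Real.tendsto_exp_atBot.comp h2

lemma myIntegrableOn_exp_Ioi (β : ℝ) (hβ : β < 0) (a : ℝ) :
    IntegrableOn (fun t : ℝ => Real.exp (β * t)) (Ioi a) := by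
  simpa [neg_mul, neg_neg] using exp_neg_integrableOn_Ioi a (neg_pos.2 hβ)

lemma myIntegral_exp_Ioi (β : ℝ) (hβ : β < 0) (a : ℝ) :
    ∫ t in Ioi a, Real.exp (β * t) = -Real.exp (β * a) / β := by
  have hβ0 : β ≠ 0 := ne_of_lt hβ
  have hderiv : ∀ x ∈ Ici a, HasDerivAt (fun t : ℝ => Real.exp (β * t) / β)
      (Real.exp (β * x)) x := by
    intro x _
    have h1 : HasDerivAt (fun t : ℝ => β * t) β x := by
      simpa using (hasDerivAt_id x).const_mul β
    simpa [mul_div_cancel_right₀ _ hβ0] using h1.exp.div_const β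
  have htop : Tendsto (fun t : ℝ => Real.exp (β * t) / β) atTop (𝓝 0) := by
    simpa using (myExpReal_tendsto β hβ).div_const β
  have := integral_Ioi_of_hasDerivAt_of_tendsto' hderiv (myIntegrableOn_exp_Ioi β hβ a) htop
  rw [this, zero_sub, neg_div]

lemma myIntegrableOn_cexp_Ioi (b : ℂ) (hb : b.re < 0) (a : ℝ) :
    IntegrableOn (fun t : ℝ => Complex.exp (b * t)) (Ioi a) := by
  have hcont : Continuous fun t : ℝ => Complex.exp (b * t) :=
    Complex.continuous_exp.comp (continuous_const.mul Complex.continuous_ofReal)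
  refine Integrable.mono' (myIntegrableOn_exp_Ioi b.re hb a)
    hcont.aestronglyMeasurable.restrict (ae_of_all _ fun t => ?_)
  simp [Complex.norm_exp, Complex.mul_re]

lemma myIntegral_cexp_Ioi (b : ℂ) (hb : b.re < 0) (a : ℝ) :
    ∫ t in Ioi a, Complex.exp (b * t) = -Complex.exp (b * a) / b := by
  have hb0 : b ≠ 0 := fun h => by simp [h] at hb
  have hderiv : ∀ x ∈ Ici a, HasDerivAt (fun t : ℝ => Complex.exp (b * t) / b)
      (Complex.exp (b * x)) x := by
    intro x _
    have h1 : HasDerivAt (fun t : ℝ => b * (t : ℂ)) b x := by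
      simpa using (Complex.ofRealCLM.hasDerivAt (x := x)).const_mul b
    simpa [mul_div_cancel_right₀ _ hb0] using h1.cexp.div_const b
  have htop : Tendsto (fun t : ℝ => Complex.exp (b * t) / b) atTop (𝓝 0) := by
    rw [tendsto_zero_iff_norm_tendsto_zero]
    have h1 := (myExpReal_tendsto b.re hb).div_const ‖b‖
    rw [zero_div] at h1
    refine h1.congr fun t => ?_
    simp [norm_div, Complex.norm_exp, Complex.mul_re]
  have := integral_Ioi_of_hasDerivAt_of_tendsto' hderiv (myIntegrableOn_cexp_Ioi b hb a) htop
  rw [this, zero_sub, neg_div]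

lemma myCore (m : ℕ) (K : ℝ) (hK : 0 < K) (b : ℂ) (hb : b.re < 0) (c : Fin m → ℂ) :
    Integrable (Set.indicator {q : ℝ × (Fin m → ℝ) | K * ∑ j, q.2 j ^ 2 < q.1}
        (fun q => Complex.exp (b * q.1 + ∑ j, c j * q.2 j))) ∧
    ∫ p : ℝ × (Fin m → ℝ),
        Set.indicator {q : ℝ × (Fin m → ℝ) | K * ∑ j, q.2 j ^ 2 < q.1}
          (fun q => Complex.exp (b * q.1 + ∑ j, c j * q.2 j)) p =
      -(1 / b) * (((Real.pi : ℂ) / (-b * K)) ^ ((1:ℂ)/2)) ^ m *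
        Complex.exp (-(∑ j, c j ^ 2) / (4 * b * K)) := by
  set S := {q : ℝ × (Fin m → ℝ) | K * ∑ j, q.2 j ^ 2 < q.1} with hSdef
  set F := fun q : ℝ × (Fin m → ℝ) => Complex.exp (b * q.1 + ∑ j, c j * q.2 j) with hFdef
  have hbK : ((b * (K : ℂ)).re) < 0 := by
    have : (b * (K : ℂ)).re = b.re * K := by simp [Complex.mul_re]
    rw [this]; exact mul_neg_of_neg_of_pos hb hK
  have hbre : b.re * K < 0 := mul_neg_of_neg_of_pos hb hK
  have hS : MeasurableSet S :=
    measurableSet_lt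
      (measurable_const.mul (Finset.measurable_sum _ fun j _ =>
        ((measurable_pi_apply j).comp measurable_snd).pow_const 2))
      measurable_fst
  have hFc : Continuous F := by
    apply Complex.continuous_exp.comp
    exact (continuous_const.mul (Complex.continuous_ofReal.comp continuous_fst)).add
      (continuous_finset_sum _ fun j _ => continuous_const.mul
        (Complex.continuous_ofReal.comp ((continuous_apply j).comp continuous_snd)))
  have hmeas : AEStronglyMeasurable (S.indicator F)
      ((volume : Measure ℝ).prod (volume : Measure (Fin m → ℝ))) := by
    rw [← Measure.volume_eq_prod]
    exact (hFc.measurable.indicator hS).aestronglyMeasurable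
  -- slice description
  have h1 : ∀ (y : Fin m → ℝ) (t : ℝ), S.indicator F (t, y) =
      (Ioi (K * ∑ j, y j ^ 2)).indicator
        (fun t => Complex.exp (b * t + ∑ j, c j * y j)) t := by
    intro y t
    by_cases h : K * ∑ j, y j ^ 2 < t <;>
      simp [Set.indicator_apply, hSdef, hFdef, h, Set.mem_Ioi, Set.mem_setOf_eq]
  have hslice : ∀ y : Fin m → ℝ, Integrable fun t => S.indicator F (t, y) := by
    intro y
    simp_rw [h1 y]
    rw [integrable_indicator_iff measurableSet_Ioi]
    have h2 : ∀ t : ℝ, Complex.exp (b * t + ∑ j, c j * y j)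
        = Complex.exp (b * t) * Complex.exp (∑ j, c j * y j) := fun t => Complex.exp_add _ _
    simp_rw [h2]
    exact (myIntegrableOn_cexp_Ioi b hb _).mul_const _
  -- norm of slice integral
  have honere : ∀ y : Fin m → ℝ, (∑ j, c j * ((y j : ℝ) : ℂ)).re = ∑ j, (c j).re * y j := by
    intro y
    rw [Complex.re_sum]
    exact Finset.sum_congr rfl fun j _ => by simp [Complex.mul_re]
  have hnorm : ∀ y : Fin m → ℝ, (∫ t, ‖S.indicator F (t, y)‖) =
      (-1 / b.re) * ∏ j, Real.exp (b.re * K * y j ^ 2 + (c j).re * y j) := by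
    intro y
    simp_rw [h1 y]
    have h3 : ∀ t : ℝ, ‖((Ioi (K * ∑ j, y j ^ 2)).indicator
        (fun t => Complex.exp (b * t + ∑ j, c j * y j))) t‖ =
        (Ioi (K * ∑ j, y j ^ 2)).indicator
          (fun t => Real.exp (b.re * t + ∑ j, (c j).re * y j)) t := by
      intro t
      rw [norm_indicator_eq_indicator_norm]
      by_cases h : t ∈ Ioi (K * ∑ j, y j ^ 2)
      · simp only [Set.indicator_of_mem h]
        rw [Complex.norm_exp, Complex.add_re, ← honere y]
        congr 2
        simp [Complex.mul_re]
      · simp only [Set.indicator_of_notMem h]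
    simp_rw [h3]
    rw [integral_indicator measurableSet_Ioi]
    have h4 : ∀ t : ℝ, Real.exp (b.re * t + ∑ j, (c j).re * y j)
        = Real.exp (b.re * t) * Real.exp (∑ j, (c j).re * y j) := fun t => Real.exp_add _ _
    simp_rw [h4]
    rw [integral_mul_const, myIntegral_exp_Ioi b.re hb]
    rw [← Real.exp_sum]
    have hsum : ∑ j, (b.re * K * y j ^ 2 + (c j).re * y j) =
        b.re * (K * ∑ j, y j ^ 2) + ∑ j, (c j).re * y j := by
      rw [Finset.sum_add_distrib, ← Finset.mul_sum, mul_assoc]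
    rw [hsum, Real.exp_add]; ring
  -- outer integrability of the norm
  have hout : Integrable (fun y : Fin m → ℝ =>
      (-1 / b.re) * ∏ j, Real.exp (b.re * K * y j ^ 2 + (c j).re * y j)) := by
    apply Integrable.const_mul
    apply Integrable.fintype_prod (f := fun j x => Real.exp (b.re * K * x ^ 2 + (c j).re * x))
    intro j
    have h := (integrable_cexp_quadratic' (b := ((b.re * K : ℝ) : ℂ))
      (by simpa using hbre) (((c j).re : ℝ) : ℂ) 0).norm
    have hfun : (fun x : ℝ => ‖Complex.exp (((b.re * K : ℝ) : ℂ) * x ^ 2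
        + (((c j).re : ℝ) : ℂ) * x + 0)‖) =
        fun x : ℝ => Real.exp (b.re * K * x ^ 2 + (c j).re * x) := by
      funext x
      rw [show (((b.re * K : ℝ) : ℂ) * x ^ 2 + (((c j).re : ℝ) : ℂ) * x + 0 : ℂ)
          = ((b.re * K * x ^ 2 + (c j).re * x : ℝ) : ℂ) from by push_cast; ring,
        Complex.norm_exp, Complex.ofReal_re]
    exact hfun ▸ h
  have hint : Integrable (S.indicator F) := by
    rw [show (volume : Measure (ℝ × (Fin m → ℝ))) = (volume : Measure ℝ).prod volume from
      Measure.volume_eq_prod _ _]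
    refine (integrable_prod_iff' hmeas).2 ⟨Filter.Eventually.of_forall hslice, ?_⟩
    simp_rw [hnorm]
    exact hout
  refine ⟨hint, ?_⟩
  -- evaluation
  have hint' : Integrable (S.indicator F)
      ((volume : Measure ℝ).prod (volume : Measure (Fin m → ℝ))) := by
    rwa [← Measure.volume_eq_prod]
  have step1 : (∫ p : ℝ × (Fin m → ℝ), S.indicator F p) =
      ∫ y : Fin m → ℝ, ∫ t : ℝ, S.indicator F (t, y) := by
    rw [show (volume : Measure (ℝ × (Fin m → ℝ))) = (volume : Measure ℝ).prod volume from
      Measure.volume_eq_prod _ _]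
    exact integral_prod_symm _ hint'
  rw [step1]
  have step2 : ∀ y : Fin m → ℝ, (∫ t : ℝ, S.indicator F (t, y)) =
      (-(1 : ℂ) / b) * ∏ j, Complex.exp (b * K * y j ^ 2 + c j * y j) := by
    intro y
    simp_rw [h1 y]
    rw [integral_indicator measurableSet_Ioi]
    have h2 : ∀ t : ℝ, Complex.exp (b * t + ∑ j, c j * y j)
        = Complex.exp (b * t) * Complex.exp (∑ j, c j * y j) := fun t => Complex.exp_add _ _
    simp_rw [h2]
    rw [integral_mul_const, myIntegral_cexp_Ioi b hb]
    rw [← Complex.exp_sum]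
    have hsum : ∑ j, (b * (K : ℂ) * (y j : ℂ) ^ 2 + c j * (y j : ℂ)) =
        b * ((K * ∑ j, y j ^ 2 : ℝ) : ℂ) + ∑ j, c j * (y j : ℂ) := by
      push_cast
      rw [Finset.sum_add_distrib, ← Finset.mul_sum, mul_assoc]
    rw [hsum, Complex.exp_add]
    ring
  simp_rw [step2]
  rw [integral_const_mul]
  have step3 : (∫ y : Fin m → ℝ, ∏ j, Complex.exp (b * K * y j ^ 2 + c j * y j)) =
      ∏ j : Fin m, ∫ x : ℝ, Complex.exp (b * K * x ^ 2 + c j * x) :=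
    integral_fintype_prod_eq_prod (ι := Fin m) fun j (x : ℝ) => Complex.exp (b * K * x ^ 2 + c j * x)
  rw [step3]
  have step4 : ∀ j : Fin m, (∫ x : ℝ, Complex.exp (b * K * x ^ 2 + c j * x)) =
      ((Real.pi : ℂ) / -(b * K)) ^ ((1:ℂ)/2) * Complex.exp (0 - c j ^ 2 / (4 * (b * K))) := by
    intro j
    have h := integral_cexp_quadratic hbK (c j) 0
    simp_rw [add_zero] at h
    exact h
  simp_rw [step4]
  rw [Finset.prod_mul_distrib, Finset.prod_const, Finset.card_univ, Fintype.card_fin,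
    ← Complex.exp_sum]
  have hsum2 : ∑ j : Fin m, (0 - c j ^ 2 / (4 * (b * (K : ℂ)))) =
      -(∑ j, c j ^ 2) / (4 * b * K) := by
    simp only [zero_sub]
    rw [mul_assoc, neg_div, Finset.sum_div, Finset.sum_neg_distrib]
  rw [hsum2, show (-b * (K:ℂ)) = -(b * K) from neg_mul b K]
  ring

lemma mySumEraseLast {M : Type*} [AddCommGroup M] (m : ℕ) (g : Fin (m + 1) → M) :
    ∑ j ∈ Finset.univ.erase (Fin.last m), g j = ∑ j : Fin m, g j.castSucc := by
  have h1 := Fin.sum_univ_castSucc (f := g)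
  have h2 := Finset.sum_erase_add Finset.univ g (Finset.mem_univ (Fin.last m))
  exact add_right_cancel (h2.trans h1)

lemma myAux (m : ℕ) (K : ℝ) (hK : 0 < K) (ξ : Fin (m + 1) → ℂ)
    (hre : (ξ (Fin.last m)).re < 0) :
    MeasureTheory.IntegrableOn
        (fun x : Euc (m + 1) => Complex.exp (∑ j, ξ j * (x j : ℂ)))
        {x : Euc (m + 1) |
          K * ∑ j ∈ Finset.univ.erase (Fin.last m), x j ^ 2 < x (Fin.last m)} ∧
      (∫ x in {x : Euc (m + 1) |
            K * ∑ j ∈ Finset.univ.erase (Fin.last m), x j ^ 2 < x (Fin.last m)},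
          Complex.exp (∑ j, ξ j * (x j : ℂ))) =
        -(1 / ξ (Fin.last m)) *
          (((Real.pi : ℂ) / (-ξ (Fin.last m) * K)) ^ ((1:ℂ)/2)) ^ m *
          Complex.exp (-(∑ j ∈ Finset.univ.erase (Fin.last m), (ξ j) ^ 2) /
            (4 * ξ (Fin.last m) * K)) := by
  set b := ξ (Fin.last m) with hbdef
  set c : Fin m → ℂ := fun j => ξ j.castSucc with hcdef
  set S : Set (Euc (m + 1)) :=
    {x | K * ∑ j ∈ Finset.univ.erase (Fin.last m), x j ^ 2 < x (Fin.last m)} with hSdef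
  set f : Euc (m + 1) → ℂ := fun x => Complex.exp (∑ j, ξ j * (x j : ℂ)) with hfdef
  let Ψ : (ℝ × (Fin m → ℝ)) ≃ᵐ Euc (m + 1) :=
    (MeasurableEquiv.piFinSuccAbove (fun _ => ℝ) (Fin.last m)).symm.trans
      (MeasurableEquiv.toLp 2 (Fin (m + 1) → ℝ))
  have hΨ : MeasurePreserving Ψ volume volume :=
    ((EuclideanSpace.volume_preserving_symm_measurableEquiv_toLp (Fin (m + 1))).symm).comp
      ((volume_preserving_piFinSuccAbove (fun _ : Fin (m + 1) => ℝ) (Fin.last m)).symm)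
  have hcoord : ∀ (p : ℝ × (Fin m → ℝ)) (j : Fin (m + 1)),
      (Ψ p) j = Fin.insertNth (α := fun _ => ℝ) (Fin.last m) p.1 p.2 j := by intro p j; rfl
  have hlast : ∀ p : ℝ × (Fin m → ℝ), (Ψ p) (Fin.last m) = p.1 := by
    intro p; rw [hcoord]; exact Fin.insertNth_apply_same _ _ _
  have hcast : ∀ (p : ℝ × (Fin m → ℝ)) (j : Fin m), (Ψ p) (Fin.castSucc j) = p.2 j := by
    intro p j
    rw [hcoord, show Fin.castSucc j = (Fin.last m).succAbove j from
      (congrFun (Fin.succAbove_last) j).symm]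
    exact Fin.insertNth_apply_succAbove _ _ _ _
  have hmem : ∀ p : ℝ × (Fin m → ℝ), (Ψ p ∈ S) ↔ K * ∑ j, p.2 j ^ 2 < p.1 := by
    intro p
    simp only [hSdef, Set.mem_setOf_eq, hlast]
    rw [mySumEraseLast m (fun j => (Ψ p) j ^ 2)]
    simp_rw [hcast]
  have hfg : ∀ p : ℝ × (Fin m → ℝ),
      f (Ψ p) = Complex.exp (b * p.1 + ∑ j, c j * p.2 j) := by
    intro p
    simp only [hfdef]
    congr 1
    rw [Fin.sum_univ_castSucc (f := fun j => ξ j * ((Ψ p) j : ℂ))]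
    simp_rw [hcast, hlast, hcdef, hbdef]
    rw [add_comm]
  have hind : (fun p => S.indicator f (Ψ p)) =
      Set.indicator {q : ℝ × (Fin m → ℝ) | K * ∑ j, q.2 j ^ 2 < q.1}
        (fun q => Complex.exp (b * q.1 + ∑ j, c j * q.2 j)) := by
    funext p
    by_cases h : K * ∑ j, p.2 j ^ 2 < p.1
    · have h1 : Ψ p ∈ S := (hmem p).2 h
      have h2 : p ∈ {q : ℝ × (Fin m → ℝ) | K * ∑ j, q.2 j ^ 2 < q.1} := h
      rw [Set.indicator_of_mem h1, Set.indicator_of_mem h2, hfg]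
    · have h1 : Ψ p ∉ S := fun hx => h ((hmem p).1 hx)
      have h2 : p ∉ {q : ℝ × (Fin m → ℝ) | K * ∑ j, q.2 j ^ 2 < q.1} := h
      rw [Set.indicator_of_notMem h1, Set.indicator_of_notMem h2]
  have hcm : ∀ j : Fin (m + 1), Measurable fun x : Euc (m + 1) => x j := fun j =>
    (measurable_pi_apply j).comp (MeasurableEquiv.toLp 2 (Fin (m + 1) → ℝ)).symm.measurable
  have hS : MeasurableSet S :=
    measurableSet_lt
      (measurable_const.mul (Finset.measurable_sum _ fun j _ => (hcm j).pow_const 2))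
      (hcm (Fin.last m))
  obtain ⟨hint, hval⟩ := myCore m K hK b hre c
  constructor
  · refine (integrable_indicator_iff hS).1 ?_
    refine (hΨ.integrable_comp_emb Ψ.measurableEmbedding).1 ?_
    have hind' : (S.indicator f) ∘ ⇑Ψ =
        Set.indicator {q : ℝ × (Fin m → ℝ) | K * ∑ j, q.2 j ^ 2 < q.1}
          (fun q => Complex.exp (b * q.1 + ∑ j, c j * q.2 j)) := by
      funext p; exact congrFun hind p
    rw [hind']
    exact hint
  · rw [← integral_indicator hS, ← hΨ.integral_comp' (S.indicator f)]
    calc (∫ p : ℝ × (Fin m → ℝ), S.indicator f (Ψ p))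
        = ∫ p : ℝ × (Fin m → ℝ),
            Set.indicator {q : ℝ × (Fin m → ℝ) | K * ∑ j, q.2 j ^ 2 < q.1}
              (fun q => Complex.exp (b * q.1 + ∑ j, c j * q.2 j)) p := by rw [hind]
      _ = -(1 / b) * (((Real.pi : ℂ) / (-b * K)) ^ ((1:ℂ)/2)) ^ m *
            Complex.exp (-(∑ j, c j ^ 2) / (4 * b * K)) := hval
      _ = -(1 / b) * (((Real.pi : ℂ) / (-b * K)) ^ ((1:ℂ)/2)) ^ m *
            Complex.exp (-(∑ j ∈ Finset.univ.erase (Fin.last m), (ξ j) ^ 2) /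
              (4 * b * K)) := by
          rw [mySumEraseLast m fun j => ξ j ^ 2]

end ParaboloidAux

/-- third identity of Lemma `lem:estimate`: for `Re ξₙ < 0`,
`∫_{xₙ>K|x′|²} e^{ξ·x} dx = −ξₙ⁻¹ (π/(−ξₙK))^{(n−1)/2} exp(−(ξ′·ξ′)/(4ξₙK))`,
the complex power being the principal branch. -/
theorem paraboloid_exponential_integral_eval
    (n : ℕ) [NeZero n] (hn : n = 2 ∨ n = 3) (K : ℝ) (hK : 0 < K)
    (ξ : Fin n → ℂ) (hre : (ξ (lastC n)).re < 0) :
    MeasureTheory.IntegrableOn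
        (fun x : Euc n => Complex.exp (∑ j, ξ j * (x j : ℂ)))
        {x : Euc n | K * sqnorm' x < x (lastC n)} ∧
      (∫ x in {x : Euc n | K * sqnorm' x < x (lastC n)},
          Complex.exp (∑ j, ξ j * (x j : ℂ))) =
        -(1 / ξ (lastC n)) *
          ((Real.pi : ℂ) / (-(ξ (lastC n)) * (K : ℂ))) ^ ((((n : ℕ) : ℂ) - 1) / 2) *
          Complex.exp (-(∑ j ∈ Finset.univ.erase (lastC n), (ξ j) ^ 2) /
            (4 * ξ (lastC n) * (K : ℂ))) := by
  have hπ : (Real.pi : ℂ) ≠ 0 := by exact_mod_cast Real.pi_ne_zero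
  rcases hn with h | h
  · subst h
    simp only [sqnorm', show lastC 2 = Fin.last 1 from rfl]
    have H := myAux 1 K hK ξ hre
    refine ⟨H.1, H.2.trans ?_⟩
    have h2 : ((((2:ℕ)) : ℂ) - 1) / 2 = (1:ℂ)/2 := by norm_num
    rw [pow_one, h2]
  · subst h
    simp only [sqnorm', show lastC 3 = Fin.last 2 from rfl]
    have H := myAux 2 K hK ξ hre
    refine ⟨H.1, H.2.trans ?_⟩
    have hre' : (ξ (Fin.last 2)).re < 0 := hre
    have hξ0 : ξ (Fin.last 2) ≠ 0 := fun h0 => by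
      rw [h0] at hre'; simp at hre' 
    have hz : ((Real.pi : ℂ) / (-ξ (Fin.last 2) * K)) ≠ 0 :=
      div_ne_zero hπ (mul_ne_zero (neg_ne_zero.2 hξ0) (by exact_mod_cast hK.ne'))
    have h1 : (((Real.pi : ℂ) / (-ξ (Fin.last 2) * K)) ^ ((1:ℂ)/2)) ^ 2 =
        ((Real.pi : ℂ) / (-ξ (Fin.last 2) * K)) := by
      rw [sq, ← Complex.cpow_add _ _ hz]
      norm_num
    have h2 : ((((3:ℕ)) : ℂ) - 1) / 2 = 1 := by norm_num
    rw [h1, h2, Complex.cpow_one]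
end
end

section
/- Let n ∈ {2,3}, let 0 < K₋ ≤ K₊, and let b > 0, τ > 0. Then ∫_{{x = (x′,xₙ) ∈ ℝⁿ : K₋|x′|² < xₙ ≤ K₊|x′|² and xₙ < b}} e^{−τ xₙ} dx = ( σ(𝕊ⁿ⁻²)/(n−1) ) · ( K₋^{−(n−1)/2} − K₊^{−(n−1)/2} ) · τ^{−(n+1)/2} · γ(τb, (n+1)/2), where σ(𝕊ⁿ⁻²) is the total surface measure of the unit sphere in ℝⁿ⁻¹ (with σ(𝕊⁰) = 2 when n = 2), and γ(t,c) = ∫₀^t e^{−s} s^{c−1} ds is the lower incomplete gamma function. -/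
open scoped BigOperators NNReal ENNReal
open MeasureTheory Metric Set

noncomputable section

section ParabolaAux

set_option maxHeartbeats 1000000

lemma lastC_succ (m : ℕ) : lastC (m + 1) = Fin.last m := rfl

lemma sqnorm'_eq (m : ℕ) (x : Euc (m + 1)) :
    sqnorm' x = ∑ j : Fin m, x (Fin.castSucc j) ^ 2 := by
  rw [sqnorm', lastC_succ, Finset.sum_erase_eq_sub (Finset.mem_univ _),
    Fin.sum_univ_castSucc]
  ring

lemma measurable_Q (m : ℕ) : Measurable (fun w : Fin m → ℝ => ∑ j, w j ^ 2) :=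
  Finset.measurable_sum _ (fun j _ => (measurable_pi_apply j).pow_const 2)

lemma measurableA (m : ℕ) (Km Kp b : ℝ) :
    MeasurableSet {z : ℝ × (Fin m → ℝ) | Km * ∑ j, z.2 j ^ 2 < z.1 ∧
      z.1 ≤ Kp * ∑ j, z.2 j ^ 2 ∧ z.1 < b} := by
  have h1 : Measurable fun z : ℝ × (Fin m → ℝ) => Km * ∑ j, z.2 j ^ 2 :=
    ((measurable_Q m).comp measurable_snd).const_mul Km
  have h2 : Measurable fun z : ℝ × (Fin m → ℝ) => Kp * ∑ j, z.2 j ^ 2 :=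
    ((measurable_Q m).comp measurable_snd).const_mul Kp
  exact (measurableSet_lt h1 measurable_fst).inter
    ((measurableSet_le measurable_fst h2).inter (measurableSet_lt measurable_fst measurable_const))

lemma transfer (m : ℕ) (Km Kp b τ : ℝ) :
    (∫ x in {x : Euc (m + 1) | Km * sqnorm' x < x (lastC (m + 1)) ∧
        x (lastC (m + 1)) ≤ Kp * sqnorm' x ∧ x (lastC (m + 1)) < b},
        Real.exp (-τ * x (lastC (m + 1)))) =
      ∫ z in {z : ℝ × (Fin m → ℝ) | Km * ∑ j, z.2 j ^ 2 < z.1 ∧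
          z.1 ≤ Kp * ∑ j, z.2 j ^ 2 ∧ z.1 < b},
        Real.exp (-τ * z.1) ∂((volume : Measure ℝ).prod (volume : Measure (Fin m → ℝ))) := by
  set S : Set (Euc (m+1)) := {x : Euc (m + 1) | Km * sqnorm' x < x (lastC (m + 1)) ∧
        x (lastC (m + 1)) ≤ Kp * sqnorm' x ∧ x (lastC (m + 1)) < b} with hSdef
  set A : Set (ℝ × (Fin m → ℝ)) := {z : ℝ × (Fin m → ℝ) | Km * ∑ j, z.2 j ^ 2 < z.1 ∧
          z.1 ≤ Kp * ∑ j, z.2 j ^ 2 ∧ z.1 < b} with hAdef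
  set T : Set (Fin (m+1) → ℝ) := {y : Fin (m+1) → ℝ |
      Km * ∑ j : Fin m, y (Fin.castSucc j) ^ 2 < y (Fin.last m) ∧
      y (Fin.last m) ≤ Kp * ∑ j : Fin m, y (Fin.castSucc j) ^ 2 ∧ y (Fin.last m) < b} with hTdef
  set e := (MeasurableEquiv.toLp 2 (Fin (m+1) → ℝ)).symm with hedef
  set epi := MeasurableEquiv.piFinSuccAbove (fun _ : Fin (m+1) => ℝ) (Fin.last m) with hepidef
  have hco : ∀ y : Fin (m+1) → ℝ, ∀ j : Fin (m+1), (e.symm y) j = y j := fun y j => rfl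
  have hT : MeasurableSet T := by
    have hq : Measurable fun y : Fin (m+1) → ℝ => ∑ j : Fin m, y (Fin.castSucc j) ^ 2 :=
      Finset.measurable_sum Finset.univ
        (fun j _ => (measurable_pi_apply (Fin.castSucc j)).pow_const 2)
    have h1 := hq.const_mul Km
    have h2 := hq.const_mul Kp
    exact (measurableSet_lt h1 (measurable_pi_apply _)).inter
      ((measurableSet_le (measurable_pi_apply _) h2).inter
        (measurableSet_lt (measurable_pi_apply _) measurable_const))
  have hpre1 : e.symm ⁻¹' S = T := by
    ext y
    simp only [Set.mem_preimage, hSdef, Set.mem_setOf_eq, sqnorm'_eq, lastC_succ, hco,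
      hTdef]
  have hins : ∀ z : ℝ × (Fin m → ℝ),
      epi.symm z = Fin.insertNth (α := fun _ => ℝ) (Fin.last m) z.1 z.2 := by
    intro z
    rw [hepidef, MeasurableEquiv.piFinSuccAbove_symm_apply]
    rfl
  have hpre2 : epi.symm ⁻¹' T = A := by
    ext z
    have hlast : Fin.insertNth (α := fun _ => ℝ) (Fin.last m) z.1 z.2 (Fin.last m) = z.1 := by
      simp
    have hcast : ∀ j : Fin m,
        Fin.insertNth (α := fun _ => ℝ) (Fin.last m) z.1 z.2 (Fin.castSucc j) = z.2 j := by
      intro j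
      rw [← Fin.succAbove_last, Fin.insertNth_apply_succAbove]
    simp only [Set.mem_preimage, hTdef, Set.mem_setOf_eq, hins, hlast, hcast, hAdef]
  have h1 := ((EuclideanSpace.volume_preserving_symm_measurableEquiv_toLp (Fin (m+1))).symm).setIntegral_preimage_emb
    (MeasurableEquiv.measurableEmbedding _) (fun x => Real.exp (-τ * x (lastC (m+1)))) S
  have h2 := ((volume_preserving_piFinSuccAbove (fun _ : Fin (m+1) => ℝ) (Fin.last m)).symm).setIntegral_preimage_emb
    (MeasurableEquiv.measurableEmbedding _)
    (fun y : Fin (m+1) → ℝ => Real.exp (-τ * y (Fin.last m))) T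
  calc (∫ x in S, Real.exp (-τ * x (lastC (m + 1))))
      = ∫ y in e.symm ⁻¹' S, Real.exp (-τ * (e.symm y) (lastC (m+1))) ∂(volume) := h1.symm
    _ = ∫ y in T, Real.exp (-τ * y (Fin.last m)) ∂(volume) := by
        rw [hpre1]
        exact setIntegral_congr_fun hT (fun y _ => by rw [hco, lastC_succ])
    _ = ∫ z in epi.symm ⁻¹' T, Real.exp (-τ * (epi.symm z) (Fin.last m)) ∂(volume) := h2.symm
    _ = ∫ z in A, Real.exp (-τ * z.1) ∂(volume) := by
        rw [hpre2]
        exact setIntegral_congr_fun (measurableA m Km Kp b)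
          (fun z _ => by rw [hins, Fin.insertNth_apply_same])
    _ = ∫ z in A, Real.exp (-τ * z.1)
          ∂((volume : Measure ℝ).prod (volume : Measure (Fin m → ℝ))) := by
        rw [← Measure.volume_eq_prod]

lemma vol_annulus (m : ℕ) [NeZero m] {r R : ℝ} (hr : 0 ≤ r) (hrR : r ≤ R) :
    volume {w : Fin m → ℝ | r ^ 2 ≤ ∑ j, w j ^ 2 ∧ ∑ j, w j ^ 2 < R ^ 2} =
      ENNReal.ofReal ((R ^ m - r ^ m) * (Real.sqrt Real.pi ^ m / Real.Gamma (m / 2 + 1))) := by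
  haveI : Nonempty (Fin m) := Fin.pos_iff_nonempty.1 (Nat.pos_of_ne_zero (NeZero.ne m))
  have hR : 0 ≤ R := hr.trans hrR
  set e := (MeasurableEquiv.toLp 2 (Fin m → ℝ)).symm
  have hS : MeasurableSet {w : Fin m → ℝ | r ^ 2 ≤ ∑ j, w j ^ 2 ∧ ∑ j, w j ^ 2 < R ^ 2} :=
    (measurableSet_le measurable_const (measurable_Q m)).inter
      (measurableSet_lt (measurable_Q m) measurable_const)
  have hpre : e ⁻¹' {w : Fin m → ℝ | r ^ 2 ≤ ∑ j, w j ^ 2 ∧ ∑ j, w j ^ 2 < R ^ 2} =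
      ball (0 : EuclideanSpace ℝ (Fin m)) R \ ball 0 r := by
    ext y
    have hy : ∑ j, (e y) j ^ 2 = ‖y‖ ^ 2 := by
      rw [EuclideanSpace.norm_eq, Real.sq_sqrt (Finset.sum_nonneg fun j _ => sq_nonneg _)]
      simp [e, Real.norm_eq_abs, sq_abs, MeasurableEquiv.coe_toLp_symm]
    simp only [Set.mem_preimage, Set.mem_setOf_eq, hy, Set.mem_diff, mem_ball_zero_iff,
      not_lt]
    constructor
    · rintro ⟨h1, h2⟩
      refine ⟨?_, ?_⟩
      · nlinarith [norm_nonneg y]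
      · nlinarith [norm_nonneg y]
    · rintro ⟨h1, h2⟩
      refine ⟨?_, ?_⟩
      · nlinarith [norm_nonneg y]
      · nlinarith [norm_nonneg y]
  have := (EuclideanSpace.volume_preserving_symm_measurableEquiv_toLp (Fin m)).measure_preimage
    hS.nullMeasurableSet
  rw [← this, hpre, measure_diff (ball_subset_ball hrR) measurableSet_ball.nullMeasurableSet
    (measure_ball_lt_top).ne, EuclideanSpace.volume_ball, EuclideanSpace.volume_ball]
  have hc : 0 ≤ Real.sqrt Real.pi ^ m / Real.Gamma (m / 2 + 1) := by
    apply div_nonneg (pow_nonneg (Real.sqrt_nonneg _) m)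
    exact (Real.Gamma_pos_of_pos (by positivity)).le
  rw [Fintype.card_fin, ← ENNReal.ofReal_pow hR, ← ENNReal.ofReal_pow hr,
    ← ENNReal.ofReal_mul (by positivity), ← ENNReal.ofReal_mul (by positivity),
    ← ENNReal.ofReal_sub _ (by positivity), ← sub_mul]

lemma sqrt_pow_eq (m : ℕ) {x : ℝ} (hx : 0 ≤ x) :
    Real.sqrt x ^ m = x ^ ((m : ℝ) / 2) := by
  rw [Real.sqrt_eq_rpow, ← Real.rpow_natCast (x ^ (1/2 : ℝ)) m, ← Real.rpow_mul hx]
  ring_nf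

lemma vol_section (m : ℕ) [NeZero m] {Km Kp t : ℝ} (hKm : 0 < Km) (hKmp : Km ≤ Kp)
    (ht : 0 < t) :
    volume {w : Fin m → ℝ | Km * ∑ j, w j ^ 2 < t ∧ t ≤ Kp * ∑ j, w j ^ 2} =
      ENNReal.ofReal (((t / Km) ^ ((m : ℝ) / 2) - (t / Kp) ^ ((m : ℝ) / 2)) *
        (Real.sqrt Real.pi ^ m / Real.Gamma (m / 2 + 1))) := by
  have hKp : 0 < Kp := hKm.trans_le hKmp
  have hann := vol_annulus m (Real.sqrt_nonneg (t / Kp))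
    (Real.sqrt_le_sqrt (div_le_div_of_nonneg_left ht.le hKm hKmp))
  have hset : {w : Fin m → ℝ | Km * ∑ j, w j ^ 2 < t ∧ t ≤ Kp * ∑ j, w j ^ 2} =
      {w : Fin m → ℝ | Real.sqrt (t / Kp) ^ 2 ≤ ∑ j, w j ^ 2 ∧
        ∑ j, w j ^ 2 < Real.sqrt (t / Km) ^ 2} := by
    ext w
    rw [Set.mem_setOf_eq, Set.mem_setOf_eq, Real.sq_sqrt (by positivity),
      Real.sq_sqrt (by positivity), div_le_iff₀ hKp, lt_div_iff₀ hKm]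
    constructor
    · rintro ⟨h1, h2⟩; exact ⟨by linarith [h2], by linarith [h1]⟩
    · rintro ⟨h1, h2⟩; exact ⟨by linarith, by linarith⟩
  rw [hset, hann, sqrt_pow_eq m (by positivity), sqrt_pow_eq m (by positivity)]

lemma lemA {p b τ : ℝ} (hb : 0 ≤ b) (hτ : 0 < τ) :
    ∫ t in (0:ℝ)..b, Real.exp (-τ * t) * t ^ p =
      τ ^ (-(p + 1)) * ∫ s in (0:ℝ)..(τ * b), Real.exp (-s) * s ^ p := by
  have hcong : Set.EqOn (fun t => Real.exp (-τ * t) * t ^ p)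
      (fun t => τ ^ (-p) * (Real.exp (-(τ * t)) * (τ * t) ^ p)) (Set.uIcc 0 b) := by
    intro t ht
    have ht0 : 0 ≤ t := by
      rw [Set.uIcc_of_le hb] at ht
      exact ht.1
    have : (τ * t) ^ p = τ ^ p * t ^ p := Real.mul_rpow hτ.le ht0
    simp only [this, neg_mul]
    rw [← mul_assoc, mul_comm (τ ^ (-p)) (Real.exp (-(τ*t))), mul_assoc, ← mul_assoc (τ ^ (-p)),
      ← Real.rpow_add hτ, neg_add_cancel, Real.rpow_zero, one_mul]
  rw [intervalIntegral.integral_congr hcong, intervalIntegral.integral_const_mul,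
    intervalIntegral.integral_comp_mul_left (fun s => Real.exp (-s) * s ^ p) hτ.ne',
    mul_zero, smul_eq_mul, ← mul_assoc]
  congr 1
  rw [← Real.rpow_neg_one τ, ← Real.rpow_add hτ]
  ring_nf

lemma fubini (m : ℕ) [NeZero m] {Km Kp b τ : ℝ} (hKm : 0 < Km) (hKmp : Km ≤ Kp)
    (hb : 0 < b) (hτ : 0 < τ) :
    (∫ z in {z : ℝ × (Fin m → ℝ) | Km * ∑ j, z.2 j ^ 2 < z.1 ∧
        z.1 ≤ Kp * ∑ j, z.2 j ^ 2 ∧ z.1 < b},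
      Real.exp (-τ * z.1) ∂((volume : Measure ℝ).prod (volume : Measure (Fin m → ℝ)))) =
    ∫ t in (0:ℝ)..b, ((t / Km) ^ ((m : ℝ) / 2) - (t / Kp) ^ ((m : ℝ) / 2)) *
        (Real.sqrt Real.pi ^ m / Real.Gamma (m / 2 + 1)) * Real.exp (-τ * t) := by
  haveI : Nonempty (Fin m) := Fin.pos_iff_nonempty.1 (Nat.pos_of_ne_zero (NeZero.ne m))
  have hKp : 0 < Kp := hKm.trans_le hKmp
  set c := Real.sqrt Real.pi ^ m / Real.Gamma (m / 2 + 1) with hcdef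
  set Q : (Fin m → ℝ) → ℝ := fun w => ∑ j, w j ^ 2 with hQdef
  have hQ0 : ∀ w, 0 ≤ Q w := fun w => Finset.sum_nonneg fun j _ => sq_nonneg _
  set A : Set (ℝ × (Fin m → ℝ)) := {z | Km * Q z.2 < z.1 ∧ z.1 ≤ Kp * Q z.2 ∧ z.1 < b}
    with hAdef
  have hA : MeasurableSet A := measurableA m Km Kp b
  set U : Set (Fin m → ℝ) := {w | Q w ≤ b / Km} with hUdef
  have hU : MeasurableSet U := measurableSet_le (measurable_Q m) measurable_const
  have hUvol : volume U < ⊤ := by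
    have hpre : ((MeasurableEquiv.toLp 2 (Fin m → ℝ)).symm) ⁻¹' U =
        closedBall (0 : EuclideanSpace ℝ (Fin m)) (Real.sqrt (b / Km)) := by
      ext y
      have hy : Q (((MeasurableEquiv.toLp 2 (Fin m → ℝ)).symm) y) = ‖y‖ ^ 2 := by
        rw [EuclideanSpace.norm_eq, Real.sq_sqrt (Finset.sum_nonneg fun j _ => sq_nonneg _)]
        simp [hQdef, Real.norm_eq_abs, sq_abs, MeasurableEquiv.coe_toLp_symm]
      simp only [Set.mem_preimage, hUdef, Set.mem_setOf_eq, hy, mem_closedBall_zero_iff]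
      exact (Real.le_sqrt (norm_nonneg y) (by positivity)).symm
    have := (EuclideanSpace.volume_preserving_symm_measurableEquiv_toLp (Fin m)).measure_preimage
      hU.nullMeasurableSet
    rw [← this, hpre]
    exact measure_closedBall_lt_top
  have hAvol : ((volume : Measure ℝ).prod volume) A < ⊤ := by
    have hsub : A ⊆ (Set.Ioc (0:ℝ) b) ×ˢ U := by
      rintro ⟨t, w⟩ ⟨h1, h2, h3⟩
      have ht0 : 0 < t := lt_of_le_of_lt (by positivity) h1
      refine ⟨⟨ht0, h3.le⟩, ?_⟩
      have : Km * Q w < b := h1.trans h3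
      exact le_of_lt ((lt_div_iff₀' hKm).2 this)
    calc ((volume : Measure ℝ).prod volume) A ≤ _ := measure_mono hsub
      _ = volume (Set.Ioc (0:ℝ) b) * volume U := Measure.prod_prod _ _
      _ < ⊤ := ENNReal.mul_lt_top (by simp) hUvol
  have hInt : IntegrableOn (fun z : ℝ × (Fin m → ℝ) => Real.exp (-τ * z.1)) A
      ((volume : Measure ℝ).prod volume) := by
    apply Measure.integrableOn_of_bounded hAvol.ne
    · exact (Real.continuous_exp.comp (continuous_const.mul continuous_fst)).aestronglyMeasurable
    · refine (ae_restrict_mem hA).mono fun z hz => ?_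
      have ht0 : 0 < z.1 := lt_of_le_of_lt (by positivity) hz.1
      rw [Real.norm_eq_abs, abs_of_pos (Real.exp_pos _)]
      exact Real.exp_le_one_iff.2 (by nlinarith)
  rw [← integral_indicator hA,
    integral_prod _ ((integrable_indicator_iff hA).2 hInt)]
  have hpt : ∀ t : ℝ, (∫ w, A.indicator (fun z => Real.exp (-τ * z.1)) (t, w)) =
      (Set.Ioo (0:ℝ) b).indicator
        (fun t => ((t / Km) ^ ((m : ℝ) / 2) - (t / Kp) ^ ((m : ℝ) / 2)) * c
          * Real.exp (-τ * t)) t := by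
    intro t
    set St : Set (Fin m → ℝ) := {w | Km * Q w < t ∧ t ≤ Kp * Q w ∧ t < b} with hStdef
    have hSt : MeasurableSet St := by
      have h1 : Measurable fun w : Fin m → ℝ => Km * Q w := (measurable_Q m).const_mul Km
      have h2 : Measurable fun w : Fin m → ℝ => Kp * Q w := (measurable_Q m).const_mul Kp
      exact (measurableSet_lt h1 measurable_const).inter
        ((measurableSet_le measurable_const h2).inter
          (MeasurableSet.const _))
    have hrw : ∀ w, A.indicator (fun z => Real.exp (-τ * z.1)) (t, w) =
        St.indicator (fun _ => Real.exp (-τ * t)) w := by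
      intro w
      simp only [Set.indicator_apply, hAdef, hStdef, Set.mem_setOf_eq]
    simp only [hrw]
    rw [integral_indicator hSt, setIntegral_const, smul_eq_mul]
    have hc : 0 ≤ c := div_nonneg (pow_nonneg (Real.sqrt_nonneg _) m)
      (Real.Gamma_pos_of_pos (by positivity)).le
    by_cases htb : t ∈ Set.Ioo (0:ℝ) b
    · rw [Set.indicator_of_mem htb]
      have hSt' : St = {w | Km * Q w < t ∧ t ≤ Kp * Q w} := by
        ext w
        simp only [hStdef, Set.mem_setOf_eq]
        exact and_congr_right fun _ => and_iff_left htb.2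
      have hnn : 0 ≤ ((t / Km) ^ ((m : ℝ) / 2) - (t / Kp) ^ ((m : ℝ) / 2)) * c := by
        apply mul_nonneg _ hc
        have h1 : t / Kp ≤ t / Km := div_le_div_of_nonneg_left htb.1.le hKm hKmp
        have := Real.rpow_le_rpow ((div_pos htb.1 hKp).le) h1 (by positivity : (0:ℝ) ≤ (m:ℝ)/2)
        linarith
      rw [hSt', measureReal_def, vol_section m hKm hKmp htb.1, ENNReal.toReal_ofReal hnn]
    · rw [Set.indicator_of_notMem htb]
      have hempty : St = ∅ := by
        ext w
        simp only [hStdef, Set.mem_setOf_eq, Set.mem_empty_iff_false, iff_false, not_and]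
        intro h1 h2 h3
        exact htb ⟨lt_of_le_of_lt (mul_nonneg hKm.le (hQ0 w)) h1, h3⟩
      rw [hempty]
      simp
  rw [integral_congr_ae (Filter.Eventually.of_forall hpt),
    integral_indicator measurableSet_Ioo, ← integral_Ioc_eq_integral_Ioo,
    ← intervalIntegral.integral_of_le hb.le]

lemma key (m : ℕ) [NeZero m] {Km Kp b τ : ℝ} (hKm : 0 < Km) (hKmp : Km ≤ Kp)
    (hb : 0 < b) (hτ : 0 < τ) :
    (∫ x in {x : Euc (m + 1) | Km * sqnorm' x < x (lastC (m + 1)) ∧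
        x (lastC (m + 1)) ≤ Kp * sqnorm' x ∧ x (lastC (m + 1)) < b},
        Real.exp (-τ * x (lastC (m + 1)))) =
      (Real.sqrt Real.pi ^ m / Real.Gamma (m / 2 + 1)) *
        (Km ^ (-((m : ℝ) / 2)) - Kp ^ (-((m : ℝ) / 2))) * τ ^ (-(((m : ℝ) + 2) / 2)) *
        ∫ s in (0:ℝ)..(τ * b), Real.exp (-s) * s ^ ((m : ℝ) / 2) := by
  have hKp : 0 < Kp := hKm.trans_le hKmp
  rw [transfer, fubini m hKm hKmp hb hτ]
  set c := Real.sqrt Real.pi ^ m / Real.Gamma (m / 2 + 1) with hcdef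
  set p := (m : ℝ) / 2 with hpdef
  have hcong : Set.EqOn
      (fun t => ((t / Km) ^ p - (t / Kp) ^ p) * c * Real.exp (-τ * t))
      (fun t => ((Km ^ (-p) - Kp ^ (-p)) * c) * (Real.exp (-τ * t) * t ^ p))
      (Set.uIcc 0 b) := by
    intro t ht
    have ht0 : 0 ≤ t := by
      rw [Set.uIcc_of_le hb.le] at ht
      exact ht.1
    simp only
    rw [Real.div_rpow ht0 hKm.le, Real.div_rpow ht0 hKp.le, Real.rpow_neg hKm.le,
      Real.rpow_neg hKp.le]
    field_simp
  rw [intervalIntegral.integral_congr hcong, intervalIntegral.integral_const_mul,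
    lemA hb.le hτ]
  have hexp : -(p + 1) = -(((m : ℝ) + 2) / 2) := by
    rw [hpdef]; ring
  rw [hexp]
  ring

end ParabolaAux

/-- fourth identity of Lemma `lem:estimate`: the exponential integral
between the paraboloids `xₙ = K₋|x′|²` and `xₙ = K₊|x′|²` below height `b` equals
`(σ(𝕊ⁿ⁻²)/(n−1)) (K₋^{−(n−1)/2} − K₊^{−(n−1)/2}) τ^{−(n+1)/2} γ(τb,(n+1)/2)`,
where `σ(𝕊⁰) = 2` and `σ(𝕊¹) = 2π`, and `γ` is the lower incomplete gamma function. -/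
theorem between_paraboloids_integral_eval
    (n : ℕ) [NeZero n] (hn : n = 2 ∨ n = 3)
    (Km Kp b τ : ℝ) (hKm : 0 < Km) (hKmp : Km ≤ Kp) (hb : 0 < b) (hτ : 0 < τ) :
    (∫ x in {x : Euc n | Km * sqnorm' x < x (lastC n) ∧
        x (lastC n) ≤ Kp * sqnorm' x ∧ x (lastC n) < b},
        Real.exp (-τ * x (lastC n))) =
      ((if n = 2 then (2 : ℝ) else 2 * Real.pi) / ((n : ℝ) - 1)) *
        (Km ^ (-(((n : ℝ) - 1) / 2)) - Kp ^ (-(((n : ℝ) - 1) / 2))) *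
        τ ^ (-(((n : ℝ) + 1) / 2)) *
        ∫ s in (0 : ℝ)..(τ * b), Real.exp (-s) * s ^ (((n : ℝ) + 1) / 2 - 1) := by
  have hπ : Real.sqrt Real.pi ≠ 0 := ne_of_gt (Real.sqrt_pos.2 Real.pi_pos)
  rcases hn with h | h
  · subst h
    refine (key 1 hKm hKmp hb hτ).trans ?_
    have hΓ : Real.Gamma ((1:ℕ) / 2 + 1) = Real.sqrt Real.pi / 2 := by
      push_cast
      rw [Real.Gamma_add_one (by norm_num), Real.Gamma_one_half_eq]
      ring
    rw [hΓ]
    norm_num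
    exact Or.inl (Or.inl (Or.inl (div_div_cancel₀ hπ)))
  · subst h
    refine (key 2 hKm hKmp hb hτ).trans ?_
    have hΓ : Real.Gamma ((2:ℕ) / 2 + 1) = 1 := by
      push_cast
      norm_num
    rw [hΓ]
    norm_num [Real.sq_sqrt Real.pi_pos.le]
end
end

section
/- Let λ, μ ∈ ℝ with μ > 0 and λ + 2μ > 0. Let ρ > 0 and let γ : (−ρ, ρ) → ℝ be differentiable with γ(0) = 0 and γ′(0) = 0. Let u = (u₁, u₂) : U → ℂ² be continuously differentiable on an open neighborhood U ⊆ ℝ² of 0 containing all points (x₁, γ(x₁)) with |x₁| < ρ, and suppose u(x₁, γ(x₁)) = 0 for all |x₁| < ρ. If moreover μ (∂₂u₁(0) + ∂₁u₂(0)) = 0 and λ ∂₁u₁(0) + (λ + 2μ) ∂₂u₂(0) = 0 (i.e. the elastic traction T_ν u vanishes at the origin, where ν = (0,−1) is the outer unit normal there), then all first-order partial derivatives of u vanish at 0, i.e. the total derivative Du(0) = 0. -/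
open scoped BigOperators NNReal ENNReal
open MeasureTheory Metric Set

noncomputable section

/-- 2-D case of Proposition `prop:ubeta`: if a `C¹` displacement field
vanishes along the boundary graph `{(x₁,γ(x₁))}` near the origin (where `γ(0)=0`,
`γ′(0)=0`) and its elastic traction vanishes at the origin, then `Du(0) = 0`. -/
theorem traction_and_boundary_vanishing_gradient_2d
    (lam mu ρ : ℝ) (hmu : 0 < mu) (hlm : 0 < lam + 2 * mu) (hρ : 0 < ρ)
    (γ : ℝ → ℝ) (hγdiff : ∀ t : ℝ, |t| < ρ → DifferentiableAt ℝ γ t)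
    (hγ0 : γ 0 = 0) (hγ'0 : deriv γ 0 = 0)
    (U : Set (Euc 2)) (hU : IsOpen U) (h0U : (0 : Euc 2) ∈ U)
    (u : Euc 2 → EucC 2) (hu : ContDiffOn ℝ 1 u U)
    (hgraph : ∀ t : ℝ, |t| < ρ → toEuc ![t, γ t] ∈ U)
    (hvan : ∀ t : ℝ, |t| < ρ → u (toEuc ![t, γ t]) = 0)
    (htr1 : (mu : ℂ) * (pd 1 (fun z => u z 0) 0 + pd 0 (fun z => u z 1) 0) = 0)
    (htr2 : (lam : ℂ) * pd 0 (fun z => u z 0) 0 +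
        ((lam : ℂ) + 2 * (mu : ℂ)) * pd 1 (fun z => u z 1) 0 = 0) :
    fderiv ℝ u 0 = 0 := by
  classical
  have hud : DifferentiableAt ℝ u 0 :=
    (hu.differentiableOn one_ne_zero).differentiableAt (hU.mem_nhds h0U)
  set D := fderiv ℝ u 0 with hD
  have hγd : DifferentiableAt ℝ γ 0 := hγdiff 0 (by simpa using hρ)
  -- the curve
  have hc0 : toEuc ![(0:ℝ), γ 0] = (0 : Euc 2) := by
    ext i; fin_cases i <;> simp [toEuc, hγ0]
  have he0 : toEuc ![(1:ℝ), 0] = EuclideanSpace.single (0 : Fin 2) (1:ℝ) := by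
    ext i; fin_cases i <;> simp [toEuc]
  have hg : HasDerivAt (fun t => toEuc ![t, γ t]) (toEuc ![(1:ℝ), 0]) 0 := by
    have h1 : HasDerivAt (fun t : ℝ => (![t, γ t] : Fin 2 → ℝ)) ![1, 0] 0 := by
      rw [hasDerivAt_pi]
      intro i
      fin_cases i
      · have := hasDerivAt_id (0:ℝ); simp at this ⊢; exact this
      · simpa [hγ'0] using hγd.hasDerivAt
    exact ((PiLp.continuousLinearEquiv 2 ℝ (fun _ : Fin 2 => ℝ)).symm.toContinuousLinearMap).hasFDerivAt.comp_hasDerivAt 0 h1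
  -- chain rule : derivative of u along the curve
  have hcomp : HasDerivAt (fun t => u (toEuc ![t, γ t])) (D (toEuc ![(1:ℝ), 0])) 0 := by
    have hud' : HasFDerivAt u D (toEuc ![(0:ℝ), γ 0]) := by
      rw [hc0]; exact hud.hasFDerivAt
    exact hud'.comp_hasDerivAt 0 hg
  have hzero : HasDerivAt (fun t => u (toEuc ![t, γ t])) 0 0 := by
    have hEv : (fun t => u (toEuc ![t, γ t])) =ᶠ[nhds (0:ℝ)] (fun _ => (0 : EucC 2)) := by
      filter_upwards [Metric.ball_mem_nhds (0:ℝ) hρ] with t ht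
      exact hvan t (by simpa [Real.dist_eq] using ht)
    exact (hasDerivAt_const (0:ℝ) (0 : EucC 2)).congr_of_eventuallyEq hEv
  have hDe0 : D (EuclideanSpace.single (0 : Fin 2) (1:ℝ)) = 0 := by
    rw [← he0]; exact hcomp.unique hzero
  -- pd expressed via D
  have hpd : ∀ j i : Fin 2, pd j (fun z => u z i) 0 = D (EuclideanSpace.single j (1:ℝ)) i := by
    intro j i
    have hproj : HasFDerivAt (fun z => u z i)
        (((EuclideanSpace.proj i : EucC 2 →L[ℂ] ℂ).restrictScalars ℝ).comp D) 0 :=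
      (((EuclideanSpace.proj i : EucC 2 →L[ℂ] ℂ).restrictScalars ℝ).hasFDerivAt).comp 0 hud.hasFDerivAt
    simp only [pd, hproj.fderiv]
    rfl
  have h00 : D (EuclideanSpace.single (0 : Fin 2) (1:ℝ)) 0 = 0 := by rw [hDe0]; rfl
  have h01 : D (EuclideanSpace.single (0 : Fin 2) (1:ℝ)) 1 = 0 := by rw [hDe0]; rfl
  -- traction conditions
  have hmuC : (mu : ℂ) ≠ 0 := by exact_mod_cast hmu.ne'
  have hlmC : ((lam : ℂ) + 2 * mu) ≠ 0 := by
    have : ((lam + 2 * mu : ℝ) : ℂ) ≠ 0 := by exact_mod_cast hlm.ne'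
    simpa [Complex.ofReal_add, Complex.ofReal_mul] using this
  have h10 : D (EuclideanSpace.single (1 : Fin 2) (1:ℝ)) 0 = 0 := by
    have h1 := htr1
    rw [hpd 1 0, hpd 0 1, h01, add_zero] at h1
    exact (mul_eq_zero.mp h1).resolve_left hmuC
  have h11 : D (EuclideanSpace.single (1 : Fin 2) (1:ℝ)) 1 = 0 := by
    have h2 := htr2
    rw [hpd 0 0, hpd 1 1, h00, mul_zero, zero_add] at h2
    exact (mul_eq_zero.mp h2).resolve_left hlmC
  have hDe1 : D (EuclideanSpace.single (1 : Fin 2) (1:ℝ)) = 0 := by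
    ext i; fin_cases i
    · simpa using h10
    · simpa using h11
  -- conclude
  ext x
  have hx : x = x 0 • EuclideanSpace.single (0 : Fin 2) (1:ℝ)
      + x 1 • EuclideanSpace.single (1 : Fin 2) (1:ℝ) := by
    ext i; fin_cases i <;> simp
  rw [hx]
  simp [map_add, _root_.map_smul, hDe0, hDe1]
end
end
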